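/- Every subgroup of order 12 of PSL(2, F₇) is isomorphic to the alternating group A₄. -/

import Mathlib

open Matrix

namespace PSL27Aux

abbrev SL7 := Matrix.SpecialLinearGroup (Fin 2) (ZMod 7)
abbrev PSL7 := Matrix.ProjectiveSpecialLinearGroup (Fin 2) (ZMod 7)

instance : DecidableEq SL7 := fun a b => decidable_of_iff (a.1 = b.1) Subtype.ext_iff.symm

set_option maxRecDepth 100000 in
set_option maxHeartbeats 4000000 in
theorem sl_pow6 : ∀ A : SL7, A ^ 6 = 1 ∨ A ^ 6 = -1 →
    (A ^ 2 = 1 ∨ A ^ 2 = -1) ∨ (A ^ 3 = 1 ∨ A ^ 3 = -1) := by decide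

theorem zmod7_sq : ∀ r : ZMod 7, r ^ 2 = 1 → r = 1 ∨ r = -1 := by decide

theorem center_iff (B : SL7) : B ∈ Subgroup.center SL7 ↔ B = 1 ∨ B = -1 := by
  rw [Matrix.SpecialLinearGroup.mem_center_iff]
  constructor
  · rintro ⟨r, hr, hB⟩
    have hr2 : r ^ 2 = 1 := by simpa using hr
    rcases zmod7_sq r hr2 with rfl | rfl
    · left
      apply Subtype.ext
      rw [← hB]
      decide
    · right
      apply Subtype.ext
      rw [← hB]
      decide
  · rintro (rfl | rfl)
    · exact ⟨1, by decide, by decide⟩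
    · exact ⟨-1, by decide, by decide⟩

theorem twelve_eq : (12 : ℕ) = 2 ^ 2 * 3 := by norm_num

theorem fact_three : (12 : ℕ).factorization 3 = 1 := by
  rw [twelve_eq, Nat.factorization_mul (by norm_num) (by norm_num),
    Nat.Prime.factorization_pow (by norm_num), Nat.Prime.factorization (by norm_num)]
  simp [Finsupp.single_apply]

theorem fact_two : (12 : ℕ).factorization 2 = 2 := by
  rw [twelve_eq, Nat.factorization_mul (by norm_num) (by norm_num),
    Nat.Prime.factorization_pow (by norm_num), Nat.Prime.factorization (by norm_num)]
  simp [Finsupp.single_apply]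

theorem psl_no6 (g : PSL7) (h : g ^ 6 = 1) : g ^ 2 = 1 ∨ g ^ 3 = 1 := by
  obtain ⟨A, rfl⟩ := QuotientGroup.mk_surjective g
  have h6 : A ^ 6 ∈ Subgroup.center SL7 := by
    rw [← QuotientGroup.eq_one_iff, QuotientGroup.mk_pow]
    exact h
  have := sl_pow6 A ((center_iff _).mp h6)
  rcases this with h2 | h3
  · left
    rw [← QuotientGroup.mk_pow, QuotientGroup.eq_one_iff, center_iff]
    exact h2
  · right
    rw [← QuotientGroup.mk_pow, QuotientGroup.eq_one_iff, center_iff]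
    exact h3

theorem no_comm {a b : PSL7} (ha : a ^ 2 = 1) (hb : b ^ 3 = 1) (hc : a * b = b * a) :
    a = 1 ∨ b = 1 := by
  have hc' : Commute a b := hc
  have h6 : (a * b) ^ 6 = 1 := by
    rw [hc'.mul_pow, show (6 : ℕ) = 2 * 3 from rfl, pow_mul, ha, one_pow, one_mul,
      show (2 * 3 : ℕ) = 3 * 2 from rfl, pow_mul, hb, one_pow]
  rcases psl_no6 _ h6 with h2 | h3
  · right
    rw [hc'.mul_pow, ha, one_mul] at h2
    calc b = b ^ 3 * (b ^ 2)⁻¹ := by group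
    _ = 1 := by rw [hb, h2, inv_one, mul_one]
  · left
    rw [hc'.mul_pow, hb, mul_one] at h3
    calc a = a ^ 3 * (a ^ 2)⁻¹ := by group
    _ = 1 := by rw [h3, ha, inv_one, mul_one]

/-- Permutation groups of equivalent types are isomorphic. -/
def permMulEquiv {α β : Type*} (e : α ≃ β) : Equiv.Perm α ≃* Equiv.Perm β where
  toEquiv := e.permCongr
  map_mul' p q := by
    ext b
    simp [Equiv.permCongr_apply]

theorem alt_sq : ∀ σ : Equiv.Perm (Fin 4), Equiv.Perm.sign σ = 1 → ∃ τ, τ ^ 2 = σ := by decide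

/-- A group of order 12 in which commuting elements of orders dividing 2 and 3 are trivial
is isomorphic to `A₄`. -/
theorem key {G : Type*} [Group G] (h12 : Nat.card G = 12)
    (hcomm : ∀ a b : G, a ^ 2 = 1 → b ^ 3 = 1 → a * b = b * a → a = 1 ∨ b = 1) :
    Nonempty (G ≃* alternatingGroup (Fin 4)) := by
  have hfin : Finite G := Nat.finite_of_card_ne_zero (by omega)
  have hcard3 : ∀ R : Sylow 3 G, Nat.card (R : Subgroup G) = 3 := by
    intro R
    rw [R.card_eq_multiplicity, h12, fact_three, pow_one]
  obtain ⟨P⟩ : Nonempty (Sylow 3 G) := inferInstance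
  have hmod := card_sylow_modEq_one 3 G
  have hdvd : Nat.card (Sylow 3 G) ∣ (P : Subgroup G).index := P.card_dvd_index
  have hPindex : (P : Subgroup G).index = 4 := by
    have := Subgroup.card_mul_index (P : Subgroup G)
    rw [hcard3 P, h12] at this
    omega
  rw [hPindex] at hdvd
  have hn : Nat.card (Sylow 3 G) = 1 ∨ Nat.card (Sylow 3 G) = 4 := by
    have h4 : Nat.card (Sylow 3 G) ≤ 4 := Nat.le_of_dvd (by norm_num) hdvd
    have h0 : 0 < Nat.card (Sylow 3 G) := Nat.pos_of_dvd_of_pos hdvd (by norm_num)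
    have hm : Nat.card (Sylow 3 G) % 3 = 1 % 3 := hmod
    interval_cases (Nat.card (Sylow 3 G)) <;> omega
  rcases hn with hn1 | hn4
  · -- unique (normal) Sylow 3-subgroup: derive a contradiction
    exfalso
    have hsub : Subsingleton (Sylow 3 G) := Nat.card_eq_one_iff_unique.mp hn1 |>.1
    have hconjmem : ∀ g h : G, h ∈ (P : Subgroup G) → g * h * g⁻¹ ∈ (P : Subgroup G) := by
      intro g h hh
      have hgP : g • P = P := Subsingleton.elim _ _
      exact (Subgroup.mem_normalizer_iff.mp (Sylow.smul_eq_iff_mem_normalizer.mp hgP) h).mp hh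
    -- an element x of order 3
    have hnt : Nontrivial ↥(P : Subgroup G) := by
      apply Finite.one_lt_card_iff_nontrivial.mp
      rw [hcard3 P]
      norm_num
    obtain ⟨y, hy⟩ := exists_ne (1 : ↥(P : Subgroup G))
    set x : G := ↑y with hxdef
    have hx1 : x ≠ 1 := fun h => hy (Subtype.ext h)
    have hx3 : x ^ 3 = 1 := by
      have h3 : y ^ 3 = 1 := by
        have := pow_card_eq_one' (x := y)
        rwa [hcard3 P] at this
      have := congrArg Subtype.val h3
      simpa using this
    have hox : orderOf x = 3 := orderOf_eq_prime hx3 hx1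
    have hzp : Subgroup.zpowers x = (P : Subgroup G) := by
      apply Subgroup.eq_of_le_of_card_ge (Subgroup.zpowers_le.mpr y.2)
      rw [Nat.card_zpowers, hox, hcard3 P]
    have hconj : ∀ g : G, g * x * g⁻¹ = x ∨ g * x * g⁻¹ = x⁻¹ := by
      intro g
      have hmem : g * x * g⁻¹ ∈ Subgroup.zpowers x := by
        rw [hzp]; exact hconjmem g x y.2
      obtain ⟨k, hk⟩ := Subgroup.mem_zpowers_iff.mp hmem
      have hk3 : x ^ (k % 3) = g * x * g⁻¹ := by
        rw [← hk]
        have := zpow_mod_orderOf x k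
        rw [hox] at this
        exact_mod_cast this
      have hr : k % 3 = 0 ∨ k % 3 = 1 ∨ k % 3 = 2 := by omega
      rcases hr with h | h | h <;> rw [h] at hk3
      · exfalso
        apply hx1
        calc x = g⁻¹ * (g * x * g⁻¹) * g := by group
        _ = g⁻¹ * (x ^ (0 : ℤ)) * g := by rw [hk3]
        _ = 1 := by simp
      · left; rw [← hk3]; simp
      · right
        rw [← hk3]
        have h2 : x ^ (2 : ℤ) = x ^ (2 : ℕ) := by norm_cast
        rw [h2]
        exact eq_inv_of_mul_eq_one_left (by rw [← pow_succ]; exact hx3)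
    -- Sylow 2-subgroup
    obtain ⟨Q⟩ : Nonempty (Sylow 2 G) := inferInstance
    have hQ4 : Nat.card (Q : Subgroup G) = 4 := by
      rw [Q.card_eq_multiplicity, h12, fact_two]
      norm_num
    have hpow4 : ∀ q ∈ (Q : Subgroup G), q ^ 4 = 1 := by
      intro q hq
      have h4 : (⟨q, hq⟩ : ↥(Q : Subgroup G)) ^ 4 = 1 := by
        have := pow_card_eq_one' (x := (⟨q, hq⟩ : ↥(Q : Subgroup G)))
        rwa [hQ4] at this
      have := congrArg Subtype.val h4
      simpa using this
    by_cases hall : ∀ q ∈ (Q : Subgroup G), q ^ 2 = 1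
    · -- elementary abelian Sylow 2
      classical
      have hQnt : Nontrivial ↥(Q : Subgroup G) := by
        apply Finite.one_lt_card_iff_nontrivial.mp
        rw [hQ4]
        norm_num
      obtain ⟨a, ha1⟩ := exists_ne (1 : ↥(Q : Subgroup G))
      have hex : ∃ b : ↥(Q : Subgroup G), b ≠ 1 ∧ b ≠ a := by
        by_contra hcon
        push_neg at hcon
        have hinj : Function.Injective (fun c : ↥(Q : Subgroup G) => (decide (c = 1) : Bool)) := by
          intro c d hcd
          by_cases hc : c = 1 <;> by_cases hd : d = 1 <;> simp [hc, hd] at hcd ⊢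
          · rw [hcon c hc, hcon d hd]
        have := Nat.card_le_card_of_injective _ hinj
        rw [hQ4] at this
        simp at this
      obtain ⟨b, hb1, hba⟩ := hex
      have hstep : ∀ c : G, c ∈ (Q : Subgroup G) → c ≠ 1 → c * x * c⁻¹ = x → False := by
        intro c hcQ hc1 hcx
        have hcx' : c * x = x * c := by
          calc c * x = (c * x * c⁻¹) * c := by group
          _ = x * c := by rw [hcx]
        rcases hcomm c x (hall c hcQ) hx3 hcx' with h | h
        · exact hc1 h
        · exact hx1 h
      have hane : (a : G) ≠ 1 := fun h => ha1 (Subtype.ext h)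
      have hbne : (b : G) ≠ 1 := fun h => hb1 (Subtype.ext h)
      rcases hconj (a : G) with hax | hax
      · exact hstep _ a.2 hane hax
      rcases hconj (b : G) with hbx | hbx
      · exact hstep _ b.2 hbne hbx
      · -- both invert x; their product centralizes x
        set c : G := ↑a * ↑b with hcdef
        have hcQ : c ∈ (Q : Subgroup G) := mul_mem a.2 b.2
        have hc1 : c ≠ 1 := by
          intro h
          apply hba
          apply Subtype.ext
          have ha2 : (a : G) * (a : G) = 1 := by
            have := hall _ a.2
            rwa [pow_two] at this
          have hbinv : (b : G) = (a : G)⁻¹ :=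
            eq_inv_of_mul_eq_one_right (by rw [← hcdef]; exact h)
          rw [hbinv]
          exact inv_eq_of_mul_eq_one_left ha2
        have hcx : c * x * c⁻¹ = x := by
          have h1 : (a : G) * x⁻¹ * (a : G)⁻¹ = x := by
            calc (a : G) * x⁻¹ * (a : G)⁻¹ = ((a : G) * x * (a : G)⁻¹)⁻¹ := by group
            _ = x := by rw [hax, inv_inv]
          calc c * x * c⁻¹ = (a : G) * ((b : G) * x * (b : G)⁻¹) * (a : G)⁻¹ := by
                rw [hcdef]; group
          _ = (a : G) * x⁻¹ * (a : G)⁻¹ := by rw [hbx]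
          _ = x := h1
        exact hstep c hcQ hc1 hcx
    · -- Sylow 2 has an element of order 4
      push_neg at hall
      obtain ⟨q, hqQ, hq2⟩ := hall
      have hq4 : q ^ 4 = 1 := hpow4 q hqQ
      have ha2 : (q ^ 2) ^ 2 = 1 := by rw [← pow_mul]; exact hq4
      have hax : q ^ 2 * x * (q ^ 2)⁻¹ = x := by
        rcases hconj q with h | h
        · calc q ^ 2 * x * (q ^ 2)⁻¹ = q * (q * x * q⁻¹) * q⁻¹ := by rw [pow_two]; group
          _ = q * x * q⁻¹ := by conv_lhs => rw [h]
          _ = x := h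
        · calc q ^ 2 * x * (q ^ 2)⁻¹ = q * (q * x * q⁻¹) * q⁻¹ := by rw [pow_two]; group
          _ = q * x⁻¹ * q⁻¹ := by rw [h]
          _ = (q * x * q⁻¹)⁻¹ := by group
          _ = x := by rw [h, inv_inv]
      have hax' : q ^ 2 * x = x * q ^ 2 := by
        calc q ^ 2 * x = (q ^ 2 * x * (q ^ 2)⁻¹) * q ^ 2 := by group
        _ = x * q ^ 2 := by rw [hax]
      rcases hcomm (q ^ 2) x ha2 hx3 hax' with h | h
      · exact hq2 h
      · exact hx1 h
  · -- four Sylow 3-subgroups: the conjugation action gives an iso with A₄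
    let φ := MulAction.toPermHom G (Sylow 3 G)
    have hinj : Function.Injective φ := by
      rw [← MonoidHom.ker_eq_bot_iff, eq_bot_iff]
      intro g hg
      have hfix : ∀ R : Sylow 3 G, g • R = R := by
        intro R
        have h1 : φ g = 1 := hg
        calc g • R = (φ g) R := rfl
        _ = R := by rw [h1]; rfl
      have hgmem : ∀ R : Sylow 3 G, g ∈ (R : Subgroup G) := by
        intro R
        have hnorm := Sylow.smul_eq_iff_mem_normalizer.mp (hfix R)
        have hidx : (Subgroup.normalizer (R : Set G)).index = 4 := by
          rw [← R.card_eq_index_normalizer, hn4]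
        have hcardnorm : Nat.card (Subgroup.normalizer (R : Set G)) = 3 := by
          have := Subgroup.card_mul_index (Subgroup.normalizer (R : Set G))
          rw [hidx, h12] at this
          omega
        have heq : (R : Subgroup G) = (Subgroup.normalizer (R : Set G)) :=
          Subgroup.eq_of_le_of_card_ge Subgroup.le_normalizer
            (by rw [hcardnorm, hcard3 R])
        rw [heq]
        exact hnorm
      have hnt : Nontrivial (Sylow 3 G) := by
        apply Finite.one_lt_card_iff_nontrivial.mp
        rw [hn4]
        norm_num
      obtain ⟨R1, R2, hR12⟩ := hnt
      have hbot : (R1 : Subgroup G) ⊓ (R2 : Subgroup G) = ⊥ := by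
        have hdvd1 : Nat.card ↥((R1 : Subgroup G) ⊓ (R2 : Subgroup G)) ∣ 3 := by
          have hd := Subgroup.card_dvd_of_le
            (inf_le_left : (R1 : Subgroup G) ⊓ (R2 : Subgroup G) ≤ (R1 : Subgroup G))
          rwa [hcard3 R1] at hd
        rcases (Nat.prime_three).eq_one_or_self_of_dvd _ hdvd1 with h1 | h3
        · exact Subgroup.card_eq_one.mp h1
        · exfalso
          have heq1 : (R1 : Subgroup G) ⊓ (R2 : Subgroup G) = (R1 : Subgroup G) :=
            Subgroup.eq_of_le_of_card_ge inf_le_left (by rw [h3, hcard3 R1])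
          have hle12 : (R1 : Subgroup G) ≤ (R2 : Subgroup G) := heq1 ▸ inf_le_right
          have : (R1 : Subgroup G) = (R2 : Subgroup G) :=
            Subgroup.eq_of_le_of_card_ge hle12 (by rw [hcard3 R1, hcard3 R2])
          exact hR12 (Sylow.ext this)
      have : g ∈ ((R1 : Subgroup G) ⊓ (R2 : Subgroup G)) :=
        Subgroup.mem_inf.mpr ⟨hgmem R1, hgmem R2⟩
      rw [hbot] at this
      exact this
    obtain ⟨e⟩ : Nonempty (Sylow 3 G ≃ Fin 4) := ⟨Finite.equivFinOfCardEq hn4⟩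
    let ψ : Equiv.Perm (Sylow 3 G) ≃* Equiv.Perm (Fin 4) := permMulEquiv e
    let Φ : G →* Equiv.Perm (Fin 4) := ψ.toMonoidHom.comp φ
    have hΦinj : Function.Injective Φ := ψ.injective.comp hinj
    have hcardrange : Nat.card Φ.range = 12 := by
      rw [← h12]
      exact (Nat.card_congr (MonoidHom.ofInjective hΦinj).toEquiv).symm
    have hcardS4 : Nat.card (Equiv.Perm (Fin 4)) = 24 := by
      rw [Nat.card_eq_fintype_card, Fintype.card_perm, Fintype.card_fin]
      rfl
    have hidx2 : Φ.range.index = 2 := by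
      have := Subgroup.card_mul_index Φ.range
      rw [hcardrange, hcardS4] at this
      omega
    have hcardalt : Nat.card (alternatingGroup (Fin 4)) = 12 := by
      have h2 := two_mul_card_alternatingGroup (α := Fin 4)
      rw [Fintype.card_perm, Fintype.card_fin] at h2
      have hf : Nat.factorial 4 = 24 := rfl
      rw [hf] at h2
      rw [Nat.card_eq_fintype_card]
      omega
    have halt : Φ.range = alternatingGroup (Fin 4) := by
      have hle : alternatingGroup (Fin 4) ≤ Φ.range := by
        intro σ hσ
        obtain ⟨τ, hτ⟩ := alt_sq σ (Equiv.Perm.mem_alternatingGroup.mp hσ)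
        rw [← hτ]
        exact Subgroup.sq_mem_of_index_two hidx2 τ
      exact (Subgroup.eq_of_le_of_card_ge hle (by rw [hcardrange, hcardalt])).symm
    exact ⟨(MonoidHom.ofInjective hΦinj).trans (MulEquiv.subgroupCongr halt)⟩

end PSL27Aux

/-- Every subgroup of order 12 of `PSL(2, F₇)` is isomorphic to the alternating group `A₄`. -/
theorem psl27_order12_iso_A4
    (K : Subgroup (Matrix.ProjectiveSpecialLinearGroup (Fin 2) (ZMod 7)))
    (hK : Nat.card K = 12) :
    Nonempty (K ≃* alternatingGroup (Fin 4)) := by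
  apply PSL27Aux.key hK
  intro a b ha hb hc
  have ha' : (a : PSL27Aux.PSL7) ^ 2 = 1 := by
    have := congrArg Subtype.val ha
    simpa using this
  have hb' : (b : PSL27Aux.PSL7) ^ 3 = 1 := by
    have := congrArg Subtype.val hb
    simpa using this
  have hc' : (a : PSL27Aux.PSL7) * b = b * a := by
    have := congrArg Subtype.val hc
    simpa using this
  rcases PSL27Aux.no_comm ha' hb' hc' with h | h
  · left; exact Subtype.ext (by simpa using h)
  · right; exact Subtype.ext (by simpa using h)
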